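/- For n ≥ 3, let P_2 = (n, n-1)···(n 3)(n 2)(n 1) in S_n, viewed inside S_{n+1}. The product τ = (2, n+1)(3, n+1)···(n, n+1)·(1 2)(1, n+1) consists of n + 1 pairwise distinct transpositions in S_{n+1}, each distinct from every factor of P_2, and τ · P_2 equals the identity. -/

import Mathlib

private lemma perm_ne_of_apply_ne {σ τ : Equiv.Perm ℕ} (x : ℕ) (h : σ x ≠ τ x) : σ ≠ τ :=
  fun e => h (by rw [e])

private lemma gchar (n : ℕ) (hn : 3 ≤ n) :
    ∀ m, m ≤ n - 1 → ∀ x,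
      ((List.range m).map fun i => Equiv.swap n (n - 1 - i)).prod x =
        if x = n then n - m else if n - m ≤ x ∧ x < n then x + 1 else x := by
  intro m
  induction m with
  | zero => intro _ x; simp; split_ifs <;> omega
  | succ m ih =>
    intro hm x
    rw [List.range_succ, List.map_append, List.prod_append]
    simp only [List.map_cons, List.map_nil, List.prod_cons, List.prod_nil, mul_one,
      Equiv.Perm.mul_apply]
    rw [ih (by omega)]
    rw [Equiv.swap_apply_def]
    split_ifs <;> first | exact ‹False›.elim | omega

private lemma fchar (n : ℕ) (hn : 3 ≤ n) :
    ∀ m, m ≤ n - 1 → ∀ x,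
      ((List.range m).map fun i => Equiv.swap (i + 2) (n + 1)).prod x =
        if m = 0 then x else
          if x = n + 1 then m + 1 else
            if x = 2 then n + 1 else
              if 3 ≤ x ∧ x ≤ m + 1 then x - 1 else x := by
  intro m
  induction m with
  | zero => intro _ x; simp
  | succ m ih =>
    intro hm x
    rw [List.range_succ, List.map_append, List.prod_append]
    simp only [List.map_cons, List.map_nil, List.prod_cons, List.prod_nil, mul_one,
      Equiv.Perm.mul_apply]
    rw [ih (by omega)]
    rw [Equiv.swap_apply_def]
    split_ifs <;> first | exact ‹False›.elim | omega

/-- Theorem 3 (existence part): for `n ≥ 3`, with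
`P₂ = (n, n-1)⋯(n 3)(n 2)(n 1)` viewed in `S_{n+1}`, the product
`τ = (2, n+1)(3, n+1)⋯(n, n+1)·(1 2)(1, n+1)` consists of `n + 1` pairwise
distinct transpositions of `S_{n+1}`, each distinct from every factor `(i n)`
of `P₂`, and `τ · P₂ = 1`. -/
theorem stmt11 (n : ℕ) (hn : 3 ≤ n) :
    ∀ τL : List (Equiv.Perm ℕ),
      τL = ((List.range (n - 1)).map fun i => Equiv.swap (i + 2) (n + 1)) ++
        [Equiv.swap 1 2, Equiv.swap 1 (n + 1)] →
      τL.length = n + 1 ∧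
      τL.Nodup ∧
      (∀ τ ∈ τL, ∃ a b, a ∈ Finset.Icc 1 (n + 1) ∧ b ∈ Finset.Icc 1 (n + 1) ∧
        a ≠ b ∧ τ = Equiv.swap a b) ∧
      (∀ τ ∈ τL, ∀ i, 1 ≤ i → i < n → τ ≠ Equiv.swap i n) ∧
      τL.prod * ((List.range (n - 1)).map fun i =>
        Equiv.swap n (n - 1 - i)).prod = 1 := by
  intro τL hτ
  subst hτ
  refine ⟨?_, ?_, ?_, ?_, ?_⟩
  · simp only [List.length_append, List.length_map, List.length_range]
    simp; omega
  · rw [List.nodup_append]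
    refine ⟨?_, ?_, ?_⟩
    · refine List.Nodup.map_on ?_ List.nodup_range
      intro i hi j hj h
      simp only [List.mem_range] at hi hj
      by_contra hne
      have h2 : (Equiv.swap (i + 2) (n + 1)) (i + 2) = (Equiv.swap (j + 2) (n + 1)) (i + 2) := by
        rw [h]
      rw [Equiv.swap_apply_left,
        Equiv.swap_apply_of_ne_of_ne (by omega) (by omega)] at h2
      omega
    · simp only [List.nodup_cons, List.mem_singleton, List.not_mem_nil, not_false_iff,
        List.nodup_nil, and_true]
      apply perm_ne_of_apply_ne 2
      rw [Equiv.swap_apply_right,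
        show (Equiv.swap 1 (n + 1)) 2 = 2 from
          Equiv.swap_apply_of_ne_of_ne (by omega) (by omega)]
      omega
    · intro a ha
      simp only [List.mem_map, List.mem_range] at ha
      obtain ⟨i, hi, rfl⟩ := ha
      intro b hmem hab; subst hab
      simp only [List.mem_cons, List.mem_singleton, List.not_mem_nil, or_false] at hmem
      rcases hmem with h | h
      · exact perm_ne_of_apply_ne (n + 1)
          (by rw [Equiv.swap_apply_right,
                show (Equiv.swap 1 2) (n + 1) = n + 1 from
                  Equiv.swap_apply_of_ne_of_ne (by omega) (by omega)]; omega) h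
      · exact perm_ne_of_apply_ne (i + 2)
          (by rw [Equiv.swap_apply_left,
                show (Equiv.swap 1 (n + 1)) (i + 2) = i + 2 from
                  Equiv.swap_apply_of_ne_of_ne (by omega) (by omega)]; omega) h
  · intro τ hτ
    rw [List.mem_append] at hτ
    rcases hτ with hτ | hτ
    · simp only [List.mem_map, List.mem_range] at hτ
      obtain ⟨i, hi, rfl⟩ := hτ
      exact ⟨i + 2, n + 1, by simp [Finset.mem_Icc]; omega, by simp [Finset.mem_Icc],
        by omega, rfl⟩
    · simp only [List.mem_cons, List.mem_singleton, List.not_mem_nil, or_false] at hτ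
      rcases hτ with rfl | rfl
      · exact ⟨1, 2, by simp [Finset.mem_Icc], by simp [Finset.mem_Icc]; omega,
          by omega, rfl⟩
      · exact ⟨1, n + 1, by simp [Finset.mem_Icc], by simp [Finset.mem_Icc],
          by omega, rfl⟩
  · intro τ hτ i h1 h2
    rw [List.mem_append] at hτ
    rcases hτ with hτ | hτ
    · simp only [List.mem_map, List.mem_range] at hτ
      obtain ⟨j, hj, rfl⟩ := hτ
      apply perm_ne_of_apply_ne (n + 1)
      rw [Equiv.swap_apply_right,
        show (Equiv.swap i n) (n + 1) = n + 1 from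
          Equiv.swap_apply_of_ne_of_ne (by omega) (by omega)]
      omega
    · simp only [List.mem_cons, List.mem_singleton, List.not_mem_nil, or_false] at hτ
      rcases hτ with rfl | rfl
      · apply perm_ne_of_apply_ne n
        rw [show (Equiv.swap 1 2) n = n from
              Equiv.swap_apply_of_ne_of_ne (by omega) (by omega),
          Equiv.swap_apply_right]
        omega
      · apply perm_ne_of_apply_ne (n + 1)
        rw [Equiv.swap_apply_right,
          show (Equiv.swap i n) (n + 1) = n + 1 from
            Equiv.swap_apply_of_ne_of_ne (by omega) (by omega)]
        omega
  · have hf := fchar n hn (n - 1) le_rfl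
    have hg := gchar n hn (n - 1) le_rfl
    have hf' : ∀ x, ((List.range (n - 1)).map fun i => Equiv.swap (i + 2) (n + 1)).prod x =
        if x = n + 1 then n else if x = 2 then n + 1 else
          if 3 ≤ x ∧ x ≤ n then x - 1 else x := by
      intro x; rw [hf]; split_ifs <;> first | exact ‹False›.elim | omega
    have hg' : ∀ x, ((List.range (n - 1)).map fun i => Equiv.swap n (n - 1 - i)).prod x =
        if x = n then 1 else if 1 ≤ x ∧ x < n then x + 1 else x := by
      intro x; rw [hg]; split_ifs <;> first | exact ‹False›.elim | omega
    have hs1 : ∀ x : ℕ, x ≠ 1 → x ≠ n + 1 → (Equiv.swap 1 (n + 1)) x = x :=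
      fun x u v => Equiv.swap_apply_of_ne_of_ne u v
    have hs2 : ∀ x : ℕ, x ≠ 1 → x ≠ 2 → (Equiv.swap 1 2) x = x :=
      fun x u v => Equiv.swap_apply_of_ne_of_ne u v
    rw [List.prod_append, List.prod_cons, List.prod_cons, List.prod_nil, mul_one]
    apply Equiv.ext
    intro x
    rw [Equiv.Perm.one_apply, Equiv.Perm.mul_apply, Equiv.Perm.mul_apply,
      Equiv.Perm.mul_apply, hg']
    rcases (by omega : x = n ∨ x = n + 1 ∨ x = 1 ∨ (2 ≤ x ∧ x < n) ∨ x = 0 ∨ n + 2 ≤ x)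
      with h | h | h | ⟨h1, h2⟩ | h | h
    · rw [if_pos h, show (Equiv.swap 1 (n + 1)) 1 = n + 1 from Equiv.swap_apply_left _ _,
        hs2 _ (by omega) (by omega), hf', if_pos rfl]
      omega
    · rw [if_neg (by omega), if_neg (by omega),
        show (Equiv.swap 1 (n + 1)) x = 1 by rw [h]; exact Equiv.swap_apply_right _ _,
        show (Equiv.swap 1 2) 1 = 2 from Equiv.swap_apply_left _ _,
        hf', if_neg (by omega), if_pos rfl]
      omega
    · rw [if_neg (by omega), if_pos (by omega), hs1 _ (by omega) (by omega),
        show (Equiv.swap 1 2) (x + 1) = 1 by rw [h]; exact Equiv.swap_apply_right _ _,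
        hf', if_neg (by omega), if_neg (by omega), if_neg (by omega)]
      omega
    · rw [if_neg (by omega), if_pos (by omega), hs1 _ (by omega) (by omega),
        hs2 _ (by omega) (by omega), hf',
        if_neg (by omega), if_neg (by omega), if_pos (by omega)]
      omega
    · rw [if_neg (by omega), if_neg (by omega), hs1 _ (by omega) (by omega),
        hs2 _ (by omega) (by omega), hf',
        if_neg (by omega), if_neg (by omega), if_neg (by omega)]
    · rw [if_neg (by omega), if_neg (by omega), hs1 _ (by omega) (by omega),
        hs2 _ (by omega) (by omega), hf',
        if_neg (by omega), if_neg (by omega), if_neg (by omega)]
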